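/- For every pre-permuton μ and every integer k ≥ 2: H_{k−1}(μ) − log k ≤ H_k(μ) ≤ H_{k−1}(μ) + log k. -/

import Mathlib

open MeasureTheory Filter

/-- The probability that `n` i.i.d. points sampled from `μ` realize the pattern `π`. -/
noncomputable def patternProb {n : ℕ} (μ : Measure (ℝ × ℝ)) (π : Equiv.Perm (Fin n)) : ℝ :=
  (n.factorial : ℝ) *
    ((Measure.pi fun _ : Fin n => μ)
      {p : Fin n → ℝ × ℝ | ∀ i j : Fin n, i < j →
        (p i).1 < (p j).1 ∧ ((p i).2 < (p j).2 ↔ π i < π j)}).toReal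

/-- Sampling entropy `H_n(μ)`. -/
noncomputable def samplingEntropy (μ : Measure (ℝ × ℝ)) (n : ℕ) : ℝ :=
  ∑ π : Equiv.Perm (Fin n), Real.negMulLog (patternProb μ π)

/-- A pre-permuton: a Borel probability measure on `ℝ²` with atomless marginals. -/
def IsPrePermuton (μ : Measure (ℝ × ℝ)) : Prop :=
  IsProbabilityMeasure μ ∧ (∀ x : ℝ, μ.map Prod.fst {x} = 0) ∧ ∀ y : ℝ, μ.map Prod.snd {y} = 0

/-- A permuton: a Borel probability measure on `[0,1]²` with uniform marginals. -/
def IsPermuton (μ : Measure (ℝ × ℝ)) : Prop :=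
  μ (Set.Icc (0:ℝ) 1 ×ˢ Set.Icc (0:ℝ) 1)ᶜ = 0 ∧
  μ.map Prod.fst = volume.restrict (Set.Icc (0:ℝ) 1) ∧
  μ.map Prod.snd = volume.restrict (Set.Icc (0:ℝ) 1)

namespace SEQaux


/-- The cell of tuples realizing pattern `π` with increasing x-coordinates. -/
def Aset (n : ℕ) (π : Equiv.Perm (Fin n)) : Set (Fin n → ℝ × ℝ) :=
  {p | ∀ i j : Fin n, i < j → (p i).1 < (p j).1 ∧ ((p i).2 < (p j).2 ↔ π i < π j)}

/-- Set of tuples with pairwise distinct coordinates. -/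
def Dset (n : ℕ) : Set (Fin n → ℝ × ℝ) :=
  {p | ∀ i j : Fin n, i ≠ j → (p i).1 ≠ (p j).1 ∧ (p i).2 ≠ (p j).2}

lemma card_filter_lt (m c : ℕ) (hc : c ≤ m) :
    (Finset.univ.filter fun v : Fin m => (v : ℕ) < c).card = c := by
  apply Finset.card_eq_of_bijective (fun i hi => (⟨i, lt_of_lt_of_le hi hc⟩ : Fin m))
  · intro a ha
    simp only [Finset.mem_filter] at ha
    exact ⟨a.1, ha.2, rfl⟩
  · intro i hi
    simp [hi]
  · intro i j hi hj h
    simpa using congrArg Fin.val h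

lemma card_filter_perm_lt {m : ℕ} (e : Equiv.Perm (Fin m)) (c : ℕ) (hc : c ≤ m) :
    (Finset.univ.filter fun i : Fin m => ((e i : ℕ) < c)).card = c := by
  have key : (Finset.univ.filter fun i : Fin m => ((e i : ℕ) < c)).card
      = (Finset.univ.filter fun v : Fin m => ((v : ℕ) < c)).card := by
    apply Finset.card_bij (fun a _ => e a)
    · intro a ha
      simp only [Finset.mem_filter] at ha ⊢
      exact ⟨Finset.mem_univ _, ha.2⟩
    · intro a _ b _ h
      exact e.injective h
    · intro b hb
      refine ⟨e.symm b, ?_, by simp⟩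
      simp only [Finset.mem_filter] at hb ⊢
      simp [hb.2]
  rw [key, card_filter_lt m c hc]

lemma perm_eq_one_of_strictMono {m : ℕ} (e : Equiv.Perm (Fin m)) (he : StrictMono e) :
    e = 1 := by
  ext i
  have h1 : (Finset.univ.filter fun j : Fin m => ((e j : ℕ) < (e i : ℕ))).card = (e i : ℕ) :=
    card_filter_perm_lt e (e i) (e i).isLt.le
  have h2 : (Finset.univ.filter fun j : Fin m => ((j : ℕ) < (i : ℕ))).card = (i : ℕ) :=
    card_filter_lt m i i.isLt.le
  have h3 : (Finset.univ.filter fun j : Fin m => ((e j : ℕ) < (e i : ℕ)))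
      = (Finset.univ.filter fun j : Fin m => ((j : ℕ) < (i : ℕ))) := by
    apply Finset.filter_congr
    intro j _
    rw [← Fin.lt_iff_val_lt_val, ← Fin.lt_iff_val_lt_val, he.lt_iff_lt]
  have : (e i : ℕ) = (i : ℕ) := by rw [← h1, h3, h2]
  simpa [Fin.ext_iff] using this

lemma perm_eq_of_pattern {m : ℕ} (π π' : Equiv.Perm (Fin m))
    (h : ∀ i j : Fin m, i < j → (π i < π j ↔ π' i < π' j)) : π = π' := by
  have hs : StrictMono ((π' * π⁻¹ : Equiv.Perm (Fin m)) : Fin m → Fin m) := by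
    intro u v huv
    have hi : π (π⁻¹ u) = u := π.apply_symm_apply u
    have hj : π (π⁻¹ v) = v := π.apply_symm_apply v
    simp only [Equiv.Perm.mul_apply]
    rcases lt_trichotomy (π⁻¹ u) (π⁻¹ v) with h1 | h1 | h1
    · exact (h _ _ h1).mp (by rw [hi, hj]; exact huv)
    · exact absurd (by rw [← hi, ← hj, h1]) huv.ne
    · have h2 : ¬ (π' (π⁻¹ v) < π' (π⁻¹ u)) := by
        intro hcon
        have := (h _ _ h1).mpr hcon
        rw [hi, hj] at this
        exact asymm huv this
      have hne : π' (π⁻¹ u) ≠ π' (π⁻¹ v) := by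
        intro hcon
        exact huv.ne (by rw [← hi, ← hj, π'.injective hcon])
      exact lt_of_le_of_ne (not_lt.mp h2) hne
  have := perm_eq_one_of_strictMono _ hs
  have := mul_inv_eq_one.mp this
  exact this.symm



/-- Insertion of a new point at x-position `a` with y-rank `b`. -/
def ins2 {n : ℕ} (a b : Fin (n + 1)) (π : Equiv.Perm (Fin n)) : Equiv.Perm (Fin (n + 1)) :=
  (finSuccEquiv' a).trans ((Equiv.optionCongr π).trans (finSuccEquiv' b).symm)

@[simp] lemma ins2_apply_self {n : ℕ} (a b : Fin (n + 1)) (π : Equiv.Perm (Fin n)) :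
    ins2 a b π a = b := by
  simp [ins2, finSuccEquiv'_at, finSuccEquiv'_symm_none]

@[simp] lemma ins2_apply_succAbove {n : ℕ} (a b : Fin (n + 1)) (π : Equiv.Perm (Fin n))
    (i : Fin n) : ins2 a b π (a.succAbove i) = b.succAbove (π i) := by
  simp [ins2, finSuccEquiv'_succAbove, finSuccEquiv'_symm_some]

lemma ins2_bijective {n : ℕ} (a : Fin (n + 1)) :
    Function.Bijective (fun bπ : Fin (n + 1) × Equiv.Perm (Fin n) => ins2 a bπ.1 bπ.2) := by
  rw [Fintype.bijective_iff_injective_and_card]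
  constructor
  · rintro ⟨b, π⟩ ⟨b', π'⟩ h
    simp only at h
    have hb : b = b' := by
      have := congrArg (fun σ : Equiv.Perm (Fin (n+1)) => σ a) h
      simpa using this
    subst hb
    have hπ : π = π' := by
      apply Equiv.ext
      intro i
      have := congrArg (fun σ : Equiv.Perm (Fin (n+1)) => σ (a.succAbove i)) h
      simp only [ins2_apply_succAbove] at this
      exact Fin.succAbove_right_injective this
    rw [hπ]
  · simp [Fintype.card_perm, Nat.factorial_succ]

lemma cycleRange_succAbove {n : ℕ} (a : Fin (n + 1)) (i : Fin n) :
    a.cycleRange (a.succAbove i) = i.succ := by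
  rcases lt_or_ge (i.castSucc) a with h | h
  · rw [Fin.succAbove_of_castSucc_lt _ _ h, Fin.cycleRange_of_lt h, Fin.coeSucc_eq_succ]
  · rw [Fin.succAbove_of_le_castSucc _ _ h,
      Fin.cycleRange_of_gt (lt_of_le_of_lt h (Fin.castSucc_lt_succ (i := i)))]

/-- Every downward-closed finset of `Fin m` is an initial segment. -/
lemma mem_iff_lt_card_of_downward {m : ℕ} (S : Finset (Fin m))
    (hS : ∀ i j : Fin m, i ≤ j → j ∈ S → i ∈ S) (i : Fin m) : i ∈ S ↔ (i : ℕ) < S.card := by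
  constructor
  · intro hi
    have h1 : Finset.Iic i ⊆ S := fun j hj => hS j i (Finset.mem_Iic.mp hj) hi
    have h2 := Finset.card_le_card h1
    rw [Fin.card_Iic] at h2
    omega
  · intro hi
    by_contra hmem
    have h2 : S ⊆ Finset.Iio i := by
      intro j hj
      rw [Finset.mem_Iio]
      by_contra hji
      exact hmem (hS i j (not_lt.mp hji) hj)
    have := Finset.card_le_card h2
    rw [Fin.card_Iio] at this
    omega

/-- When all y-coordinates are distinct, the pattern iff holds for all pairs. -/
lemma pattern_iff_of_distinct {m : ℕ} {σ : Equiv.Perm (Fin m)} {q : Fin m → ℝ × ℝ}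
    (hq : q ∈ Aset m σ) (hd : ∀ u v : Fin m, u ≠ v → (q u).2 ≠ (q v).2)
    (u v : Fin m) : (q u).2 < (q v).2 ↔ σ u < σ v := by
  rcases lt_trichotomy u v with h | h | h
  · exact (hq u v h).2
  · subst h; simp
  · have h1 := (hq v u h).2
    constructor
    · intro hlt
      have hne : σ u ≠ σ v := fun hc => h.ne' (σ.injective hc)
      rcases lt_or_gt_of_ne hne with h2 | h2
      · exact h2
      · exact absurd (h1.mpr h2) (asymm hlt)
    · intro hlt
      have hne : (q u).2 ≠ (q v).2 := hd u v h.ne'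
      rcases lt_or_gt_of_ne hne with h2 | h2
      · exact h2
      · exact absurd (h1.mp h2) (asymm hlt)

/-- x-coordinates are strictly increasing on a pattern cell. -/
lemma strictMono_x {m : ℕ} {σ : Equiv.Perm (Fin m)} {q : Fin m → ℝ × ℝ}
    (hq : q ∈ Aset m σ) : StrictMono (fun u => (q u).1) :=
  fun u v h => (hq u v h).1

lemma measurableSet_Aset (n : ℕ) (π : Equiv.Perm (Fin n)) : MeasurableSet (Aset n π) := by
  have h1 : ∀ i j : Fin n, MeasurableSet {p : Fin n → ℝ × ℝ | (p i).1 < (p j).1} := fun i j =>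
    measurableSet_lt ((measurable_pi_apply i).fst) ((measurable_pi_apply j).fst)
  have h2 : ∀ i j : Fin n, MeasurableSet {p : Fin n → ℝ × ℝ | (p i).2 < (p j).2} := fun i j =>
    measurableSet_lt ((measurable_pi_apply i).snd) ((measurable_pi_apply j).snd)
  have heq : Aset n π = ⋂ i, ⋂ j, {p : Fin n → ℝ × ℝ |
      i < j → ((p i).1 < (p j).1 ∧ ((p i).2 < (p j).2 ↔ π i < π j))} := by
    ext p; simp [Aset, Set.mem_iInter]
  rw [heq]
  refine MeasurableSet.iInter fun i => MeasurableSet.iInter fun j => ?_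
  by_cases hij : i < j
  · simp only [hij, true_implies]
    by_cases hπ : π i < π j
    · simp only [hπ, iff_true]
      exact (h1 i j).inter (h2 i j)
    · simp only [hπ, iff_false]
      exact (h1 i j).inter (h2 i j).compl
  · simp [hij]

lemma measurableSet_Dset (n : ℕ) : MeasurableSet (Dset n) := by
  have h1 : ∀ i j : Fin n, MeasurableSet {p : Fin n → ℝ × ℝ | (p i).1 = (p j).1} := fun i j =>
    measurableSet_eq_fun ((measurable_pi_apply i).fst) ((measurable_pi_apply j).fst)
  have h2 : ∀ i j : Fin n, MeasurableSet {p : Fin n → ℝ × ℝ | (p i).2 = (p j).2} := fun i j =>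
    measurableSet_eq_fun ((measurable_pi_apply i).snd) ((measurable_pi_apply j).snd)
  have heq : Dset n = ⋂ i, ⋂ j, {p : Fin n → ℝ × ℝ |
      i ≠ j → ((p i).1 ≠ (p j).1 ∧ (p i).2 ≠ (p j).2)} := by
    ext p; simp [Dset, Set.mem_iInter]
  rw [heq]
  refine MeasurableSet.iInter fun i => MeasurableSet.iInter fun j => ?_
  by_cases hij : i = j
  · simp [hij]
  · simp only [hij, ne_eq, not_false_iff, true_implies]
    exact ((h1 i j).compl).inter ((h2 i j).compl)



variable {n : ℕ} (μ : Measure (ℝ × ℝ)) [IsProbabilityMeasure μ]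

lemma measurable_comp_perm (ρ : Equiv.Perm (Fin n)) :
    Measurable (fun p : Fin n → ℝ × ℝ => p ∘ ρ) :=
  measurable_pi_lambda _ fun i => measurable_pi_apply (ρ i)

lemma map_comp_perm (ρ : Equiv.Perm (Fin n)) :
    Measure.map (fun p : Fin n → ℝ × ℝ => p ∘ ρ) (Measure.pi fun _ => μ)
      = Measure.pi fun _ => μ := by
  refine (Measure.pi_eq fun s hs => ?_).symm
  rw [Measure.map_apply (measurable_comp_perm ρ) (MeasurableSet.univ_pi hs)]
  have hpre : (fun p : Fin n → ℝ × ℝ => p ∘ ρ) ⁻¹' Set.pi Set.univ s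
      = Set.pi Set.univ (fun j => s (ρ.symm j)) := by
    ext p
    simp only [Set.mem_preimage, Set.mem_pi, Set.mem_univ, true_implies, Function.comp]
    constructor
    · intro h j
      have := h (ρ.symm j)
      simpa using this
    · intro h i
      have := h (ρ i)
      simpa using this
  rw [hpre, Measure.pi_pi]
  exact Equiv.prod_comp ρ.symm (fun j => μ (s j))

lemma measure_preimage_comp_perm (ρ : Equiv.Perm (Fin n)) {S : Set (Fin n → ℝ × ℝ)}
    (hS : MeasurableSet S) :
    (Measure.pi fun _ : Fin n => μ) ((fun p => p ∘ ρ) ⁻¹' S)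
      = (Measure.pi fun _ : Fin n => μ) S := by
  rw [← Measure.map_apply (measurable_comp_perm ρ) hS, map_comp_perm μ ρ]

lemma map_pair {i j : Fin n} (hij : i ≠ j) :
    Measure.map (fun p : Fin n → ℝ × ℝ => (p i, p j)) (Measure.pi fun _ => μ) = μ.prod μ := by
  have hmeas : Measurable (fun p : Fin n → ℝ × ℝ => (p i, p j)) :=
    (measurable_pi_apply i).prodMk (measurable_pi_apply j)
  refine (Measure.prod_eq fun s t hs ht => ?_).symm
  rw [Measure.map_apply hmeas (hs.prod ht)]
  have hpre : (fun p : Fin n → ℝ × ℝ => (p i, p j)) ⁻¹' (s ×ˢ t)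
      = Set.pi Set.univ (fun l => if l = i then s else if l = j then t else Set.univ) := by
    ext p
    simp only [Set.mem_preimage, Set.mem_prod, Set.mem_pi, Set.mem_univ, true_implies]
    constructor
    · rintro ⟨h1, h2⟩ l
      by_cases hl : l = i
      · subst hl; simp [h1]
      · by_cases hl' : l = j
        · subst hl'; simp [hl, h2]
        · simp [hl, hl']
    · intro h
      have hi := h i
      have hj := h j
      simp only [if_pos rfl] at hi
      rw [if_neg (Ne.symm hij), if_pos rfl] at hj
      exact ⟨hi, hj⟩
  rw [hpre, Measure.pi_pi]
  rw [← Finset.mul_prod_erase Finset.univ _ (Finset.mem_univ i)]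
  have hjmem : j ∈ Finset.univ.erase i := Finset.mem_erase.mpr ⟨Ne.symm hij, Finset.mem_univ j⟩
  rw [← Finset.mul_prod_erase _ _ hjmem]
  rw [if_pos rfl, if_neg (Ne.symm hij), if_pos rfl]
  have hrest : ∏ l ∈ (Finset.univ.erase i).erase j,
      μ (if l = i then s else if l = j then t else Set.univ) = 1 := by
    apply Finset.prod_eq_one
    intro l hl
    rw [Finset.mem_erase, Finset.mem_erase] at hl
    rw [if_neg hl.2.1, if_neg hl.1]
    exact measure_univ
  rw [hrest, mul_one]

lemma null_x_eq (hx : ∀ x : ℝ, μ.map Prod.fst {x} = 0) {i j : Fin n} (hij : i ≠ j) :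
    (Measure.pi fun _ : Fin n => μ) {p : Fin n → ℝ × ℝ | (p i).1 = (p j).1} = 0 := by
  have hmeas : Measurable (fun p : Fin n → ℝ × ℝ => (p i, p j)) :=
    (measurable_pi_apply i).prodMk (measurable_pi_apply j)
  have hset : MeasurableSet {q : (ℝ × ℝ) × (ℝ × ℝ) | q.1.1 = q.2.1} :=
    measurableSet_eq_fun (measurable_fst.fst) (measurable_snd.fst)
  have heq : {p : Fin n → ℝ × ℝ | (p i).1 = (p j).1}
      = (fun p : Fin n → ℝ × ℝ => (p i, p j)) ⁻¹' {q | q.1.1 = q.2.1} := rfl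
  rw [heq, ← Measure.map_apply hmeas hset, map_pair μ hij, Measure.prod_apply hset]
  have hz : ∀ u : ℝ × ℝ, μ (Prod.mk u ⁻¹' {q : (ℝ × ℝ) × (ℝ × ℝ) | q.1.1 = q.2.1}) = 0 := by
    intro u
    have hpre : Prod.mk u ⁻¹' {q : (ℝ × ℝ) × (ℝ × ℝ) | q.1.1 = q.2.1}
        = Prod.fst ⁻¹' ({u.1} : Set ℝ) := by
      ext v
      simp [eq_comm]
    rw [hpre, ← Measure.map_apply measurable_fst (measurableSet_singleton _)]
    exact hx u.1
  simp only [hz]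
  simp

lemma null_y_eq (hy : ∀ y : ℝ, μ.map Prod.snd {y} = 0) {i j : Fin n} (hij : i ≠ j) :
    (Measure.pi fun _ : Fin n => μ) {p : Fin n → ℝ × ℝ | (p i).2 = (p j).2} = 0 := by
  have hmeas : Measurable (fun p : Fin n → ℝ × ℝ => (p i, p j)) :=
    (measurable_pi_apply i).prodMk (measurable_pi_apply j)
  have hset : MeasurableSet {q : (ℝ × ℝ) × (ℝ × ℝ) | q.1.2 = q.2.2} :=
    measurableSet_eq_fun (measurable_fst.snd) (measurable_snd.snd)
  have heq : {p : Fin n → ℝ × ℝ | (p i).2 = (p j).2}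
      = (fun p : Fin n → ℝ × ℝ => (p i, p j)) ⁻¹' {q | q.1.2 = q.2.2} := rfl
  rw [heq, ← Measure.map_apply hmeas hset, map_pair μ hij, Measure.prod_apply hset]
  have hz : ∀ u : ℝ × ℝ, μ (Prod.mk u ⁻¹' {q : (ℝ × ℝ) × (ℝ × ℝ) | q.1.2 = q.2.2}) = 0 := by
    intro u
    have hpre : Prod.mk u ⁻¹' {q : (ℝ × ℝ) × (ℝ × ℝ) | q.1.2 = q.2.2}
        = Prod.snd ⁻¹' ({u.2} : Set ℝ) := by
      ext v
      simp [eq_comm]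
    rw [hpre, ← Measure.map_apply measurable_snd (measurableSet_singleton _)]
    exact hy u.2
  simp only [hz]
  simp

lemma null_Dset_compl (hx : ∀ x : ℝ, μ.map Prod.fst {x} = 0)
    (hy : ∀ y : ℝ, μ.map Prod.snd {y} = 0) :
    (Measure.pi fun _ : Fin n => μ) (Dset n)ᶜ = 0 := by
  have hsub : (Dset n)ᶜ ⊆ ⋃ ij : Fin n × Fin n,
      {p : Fin n → ℝ × ℝ | ij.1 ≠ ij.2 ∧
        ((p ij.1).1 = (p ij.2).1 ∨ (p ij.1).2 = (p ij.2).2)} := by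
    intro p hp
    simp only [Dset, Set.mem_compl_iff, Set.mem_setOf_eq, not_forall] at hp
    obtain ⟨i, j, hij, hcon⟩ := hp
    rw [not_and_or, not_not, not_not] at hcon
    exact Set.mem_iUnion.mpr ⟨(i, j), hij, hcon⟩
  refine measure_mono_null hsub (measure_iUnion_null fun ij => ?_)
  by_cases hij : ij.1 = ij.2
  · convert measure_empty
    · ext p; simp [hij]
    · infer_instance
  · refine measure_mono_null (fun p hp => ?_)
      (measure_union_null (null_x_eq μ hx hij) (null_y_eq μ hy hij))
    exact hp.2



lemma negMulLog_sum_le {α : Type*} {s : Finset α} {f : α → ℝ} (hf : ∀ i ∈ s, 0 ≤ f i) :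
    Real.negMulLog (∑ i ∈ s, f i) ≤ ∑ i ∈ s, Real.negMulLog (f i) := by
  set S := ∑ i ∈ s, f i with hS
  have hS0 : 0 ≤ S := Finset.sum_nonneg hf
  have hrw : Real.negMulLog S = ∑ i ∈ s, f i * (-Real.log S) := by
    rw [← Finset.sum_mul, ← hS]
    simp [Real.negMulLog]
  rw [hrw]
  apply Finset.sum_le_sum
  intro i hi
  rcases eq_or_lt_of_le (hf i hi) with h0 | h0
  · simp [← h0, Real.negMulLog]
  · have hfS : f i ≤ S := Finset.single_le_sum hf hi
    have hlog : Real.log (f i) ≤ Real.log S := Real.log_le_log h0 hfS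
    have : f i * (-Real.log S) ≤ f i * (-Real.log (f i)) := by nlinarith
    simpa [Real.negMulLog, neg_mul, mul_comm] using this

lemma sum_negMulLog_le {α : Type*} {s : Finset α} {f : α → ℝ} (hf : ∀ i ∈ s, 0 ≤ f i) :
    ∑ i ∈ s, Real.negMulLog (f i)
      ≤ Real.negMulLog (∑ i ∈ s, f i) + (∑ i ∈ s, f i) * Real.log s.card := by
  classical
  set s' := s.filter (fun i => f i ≠ 0) with hs'
  have hsum : ∑ i ∈ s', f i = ∑ i ∈ s, f i := Finset.sum_filter_ne_zero s
  have hnml : ∑ i ∈ s', Real.negMulLog (f i) = ∑ i ∈ s, Real.negMulLog (f i) := by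
    apply Finset.sum_subset (Finset.filter_subset _ _)
    intro i hi hni
    have : f i = 0 := by
      by_contra hne
      exact hni (Finset.mem_filter.mpr ⟨hi, hne⟩)
    simp [this]
  rcases Finset.eq_empty_or_nonempty s' with he | hne
  · have hz : ∑ i ∈ s, f i = 0 := by rw [← hsum, he, Finset.sum_empty]
    have hz2 : ∑ i ∈ s, Real.negMulLog (f i) = 0 := by
      rw [← hnml, he, Finset.sum_empty]
    rw [hz, hz2]
    simp
  · have hpos : ∀ i ∈ s', 0 < f i := by
      intro i hi
      rw [hs', Finset.mem_filter] at hi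
      exact lt_of_le_of_ne (hf i hi.1) (Ne.symm hi.2)
    set S := ∑ i ∈ s, f i with hSdef
    have hSpos : 0 < S := by
      rw [← hsum]
      exact Finset.sum_pos hpos hne
    set m : ℝ := (s'.card : ℝ) with hm
    have hmpos : 0 < m := by
      rw [hm]
      exact_mod_cast Finset.card_pos.mpr hne
    have key : ∀ i ∈ s', Real.negMulLog (f i)
        ≤ f i * (Real.log m - Real.log S) + S / m - f i := by
      intro i hi
      have hfi : 0 < f i := hpos i hi
      have hL : Real.log (S / (m * f i)) ≤ S / (m * f i) - 1 :=
        Real.log_le_sub_one_of_pos (by positivity)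
      have hexp : Real.log (S / (m * f i)) = Real.log S - Real.log m - Real.log (f i) := by
        rw [Real.log_div (ne_of_gt hSpos) (by positivity),
          Real.log_mul (ne_of_gt hmpos) (ne_of_gt hfi)]
        ring
      have hfrac : f i * (S / (m * f i)) = S / m := by
        field_simp
      have h2 : f i * (Real.log S - Real.log m - Real.log (f i)) ≤ S / m - f i := by
        calc f i * (Real.log S - Real.log m - Real.log (f i))
            = f i * Real.log (S / (m * f i)) := by rw [hexp]
          _ ≤ f i * (S / (m * f i) - 1) := mul_le_mul_of_nonneg_left hL hfi.le
          _ = S / m - f i := by rw [mul_sub, hfrac]; ring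
      simp only [Real.negMulLog, neg_mul]
      nlinarith [h2]
    have hsum2 : ∑ i ∈ s', Real.negMulLog (f i)
        ≤ ∑ i ∈ s', (f i * (Real.log m - Real.log S) + S / m - f i) := Finset.sum_le_sum key
    have hrhs : ∑ i ∈ s', (f i * (Real.log m - Real.log S) + S / m - f i)
        = S * (Real.log m - Real.log S) + m * (S / m) - S := by
      rw [Finset.sum_sub_distrib, Finset.sum_add_distrib, ← Finset.sum_mul, hsum,
        Finset.sum_const, nsmul_eq_mul, ← hm]
    have hmS : m * (S / m) = S := by field_simp
    have step : ∑ i ∈ s, Real.negMulLog (f i) ≤ Real.negMulLog S + S * Real.log m := by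
      rw [← hnml]
      calc ∑ i ∈ s', Real.negMulLog (f i)
          ≤ S * (Real.log m - Real.log S) + m * (S / m) - S := hsum2.trans (le_of_eq hrhs)
        _ = Real.negMulLog S + S * Real.log m := by
            rw [hmS]; simp [Real.negMulLog]; ring
    refine step.trans ?_
    have hcard : m ≤ (s.card : ℝ) := by
      rw [hm]
      exact_mod_cast Finset.card_le_card (Finset.filter_subset _ _)
    have : Real.log m ≤ Real.log s.card := Real.log_le_log hmpos hcard
    nlinarith [hSpos.le]



/-- The cell of the decomposition: tuples whose `a.cycleRange`-rearrangement realizes the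
inserted pattern. -/
def Cset (n : ℕ) (π : Equiv.Perm (Fin n)) (a b : Fin (n + 1)) : Set (Fin (n + 1) → ℝ × ℝ) :=
  (fun p => p ∘ (a.cycleRange : Equiv.Perm (Fin (n + 1)))) ⁻¹' Aset (n + 1) (ins2 a b π)

lemma Cset_subset_B {n : ℕ} (π : Equiv.Perm (Fin n)) (a b : Fin (n + 1))
    {p : Fin (n + 1) → ℝ × ℝ} (hp : p ∈ Cset n π a b) :
    (fun i : Fin n => p i.succ) ∈ Aset n π := by
  intro i j hij
  have h := hp (a.succAbove i) (a.succAbove j) (Fin.strictMono_succAbove a hij)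
  simp only [Function.comp_apply, cycleRange_succAbove, ins2_apply_succAbove,
    Fin.succAbove_lt_succAbove_iff] at h
  exact h

lemma Cset_ranks {n : ℕ} (π : Equiv.Perm (Fin n)) (a b : Fin (n + 1))
    {p : Fin (n + 1) → ℝ × ℝ} (hp : p ∈ Cset n π a b) (hpD : p ∈ Dset (n + 1)) :
    (a : ℕ) = (Finset.univ.filter fun i : Fin (n + 1) => (p i).1 < (p 0).1).card ∧
    (b : ℕ) = (Finset.univ.filter fun i : Fin (n + 1) => (p i).2 < (p 0).2).card := by
  set e1 : Equiv.Perm (Fin (n + 1)) := (a.cycleRange : Equiv.Perm (Fin (n + 1))) with he1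
  have hq : (p ∘ e1) ∈ Aset (n + 1) (ins2 a b π) := hp
  have hpe : ∀ i : Fin (n + 1), p i = (p ∘ e1) (e1⁻¹ i) := by
    intro i; simp
  have hp0 : p 0 = (p ∘ e1) a := by
    simp [he1, Fin.cycleRange_self]
  constructor
  · have hiff : ∀ i : Fin (n + 1), ((p i).1 < (p 0).1) ↔ ((e1⁻¹ i : ℕ) < (a : ℕ)) := by
      intro i
      rw [hpe i, hp0]
      rw [(strictMono_x hq).lt_iff_lt]
      exact Fin.lt_iff_val_lt_val
    rw [Finset.filter_congr (fun i _ => hiff i)]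
    exact (card_filter_perm_lt e1⁻¹ a a.isLt.le).symm
  · have hydist : ∀ u v : Fin (n + 1), u ≠ v → ((p ∘ e1) u).2 ≠ ((p ∘ e1) v).2 := by
      intro u v huv
      exact (hpD (e1 u) (e1 v) (fun hc => huv (e1.injective hc))).2
    have hyiff := pattern_iff_of_distinct hq hydist
    have hiff : ∀ i : Fin (n + 1), ((p i).2 < (p 0).2)
        ↔ (((e1⁻¹.trans (ins2 a b π)) i : ℕ) < (b : ℕ)) := by
      intro i
      rw [hpe i, hp0, hyiff (e1⁻¹ i) a, ins2_apply_self]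
      exact Fin.lt_iff_val_lt_val
    rw [Finset.filter_congr (fun i _ => hiff i)]
    exact (card_filter_perm_lt (e1⁻¹.trans (ins2 a b π)) b b.isLt.le).symm

lemma coverage {n : ℕ} (π : Equiv.Perm (Fin n)) {p : Fin (n + 1) → ℝ × ℝ}
    (hpB : (fun i : Fin n => p i.succ) ∈ Aset n π) (hpD : p ∈ Dset (n + 1)) :
    ∃ a b : Fin (n + 1), p ∈ Cset n π a b := by
  classical
  -- x-rank of p 0
  set Sx : Finset (Fin n) := Finset.univ.filter fun i : Fin n => (p i.succ).1 < (p 0).1 with hSx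
  have hSxle : Sx.card ≤ n := by
    calc Sx.card ≤ Finset.univ.card := Finset.card_filter_le _ _
      _ = n := by simp
  set a : Fin (n + 1) := ⟨Sx.card, Nat.lt_succ_of_le hSxle⟩ with ha
  have htx : StrictMono fun i : Fin n => (p i.succ).1 := strictMono_x hpB
  have hxchar : ∀ i : Fin n, ((p i.succ).1 < (p 0).1 ↔ (i : ℕ) < (a : ℕ)) := by
    intro i
    have hdown : ∀ i j : Fin n, i ≤ j → j ∈ Sx → i ∈ Sx := by
      intro i j hij hj
      simp only [hSx, Finset.mem_filter, Finset.mem_univ, true_and] at hj ⊢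
      exact lt_of_le_of_lt (htx.monotone hij) hj
    have := mem_iff_lt_card_of_downward Sx hdown i
    simpa [hSx, Finset.mem_filter] using this
  -- y-rank of p 0
  set Sy : Finset (Fin n) := Finset.univ.filter fun i : Fin n => (p i.succ).2 < (p 0).2 with hSy
  have hSyle : Sy.card ≤ n := by
    calc Sy.card ≤ Finset.univ.card := Finset.card_filter_le _ _
      _ = n := by simp
  set b : Fin (n + 1) := ⟨Sy.card, Nat.lt_succ_of_le hSyle⟩ with hb
  have hydist : ∀ u v : Fin n, u ≠ v →
      ((fun i : Fin n => p i.succ) u).2 ≠ ((fun i : Fin n => p i.succ) v).2 := by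
    intro u v huv
    exact (hpD u.succ v.succ (fun hc => huv (Fin.succ_injective n hc))).2
  have hyiff := pattern_iff_of_distinct hpB hydist
  have hychar : ∀ i : Fin n, ((p i.succ).2 < (p 0).2 ↔ ((π i : ℕ) < (b : ℕ))) := by
    intro i
    set Sy' : Finset (Fin n) := Sy.image π with hSy'
    have hcard' : Sy'.card = Sy.card := Finset.card_image_of_injective _ π.injective
    have hmem' : ∀ j : Fin n, π j ∈ Sy' ↔ j ∈ Sy := by
      intro j
      simp only [hSy', Finset.mem_image]
      constructor
      · rintro ⟨u, hu, huj⟩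
        rwa [π.injective huj] at hu
      · intro hj
        exact ⟨j, hj, rfl⟩
    have hdown' : ∀ u v : Fin n, u ≤ v → v ∈ Sy' → u ∈ Sy' := by
      intro u v huv hv
      rcases eq_or_lt_of_le huv with rfl | huv
      · exact hv
      · simp only [hSy', Finset.mem_image] at hv
        obtain ⟨j, hj, rfl⟩ := hv
        have hu : π (π.symm u) = u := π.apply_symm_apply u
        have h1 : (p (π.symm u).succ).2 < (p j.succ).2 := by
          rw [hyiff]
          rw [hu]
          exact huv
        simp only [hSy, Finset.mem_filter, Finset.mem_univ, true_and] at hj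
        have h2 : (π.symm u) ∈ Sy := by
          simp only [hSy, Finset.mem_filter, Finset.mem_univ, true_and]
          exact h1.trans hj
        rw [← hu]
        exact (hmem' _).mpr h2
    have := mem_iff_lt_card_of_downward Sy' hdown' (π i)
    rw [hmem', hcard'] at this
    simp only [hSy, Finset.mem_filter, Finset.mem_univ, true_and] at this
    exact this
  refine ⟨a, b, ?_⟩
  -- show p ∘ a.cycleRange ∈ Aset (n+1) (ins2 a b π)
  intro u v huv
  simp only [Function.comp_apply]
  rcases eq_or_ne u a with rfl | hu
  · rcases eq_or_ne v a with rfl | hv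
    · exact absurd huv (lt_irrefl _)
    · obtain ⟨m, rfl⟩ := Fin.exists_succAbove_eq hv
      rw [Fin.cycleRange_self, cycleRange_succAbove, ins2_apply_self, ins2_apply_succAbove]
      have ham : (a : ℕ) ≤ (m : ℕ) := by
        have h := (Fin.lt_succAbove_iff_le_castSucc a m).mp huv
        simpa [Fin.le_def] using h
      have hne1 := (hpD 0 m.succ (Fin.succ_ne_zero m).symm).1
      have hne2 := (hpD 0 m.succ (Fin.succ_ne_zero m).symm).2
      constructor
      · have h1 : ¬ ((p m.succ).1 < (p 0).1) := by
          rw [hxchar m]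
          exact not_lt.mpr ham
        exact lt_of_le_of_ne (not_lt.mp h1) hne1
      · rw [Fin.lt_succAbove_iff_le_castSucc]
        constructor
        · intro hlt
          have h1 : ¬ ((p m.succ).2 < (p 0).2) := asymm hlt
          rw [hychar m] at h1
          rw [Fin.le_def]
          simp only [Fin.coe_castSucc]
          exact not_lt.mp h1
        · intro hle
          rw [Fin.le_def] at hle
          simp only [Fin.coe_castSucc] at hle
          have h1 : ¬ ((π m : ℕ) < (b : ℕ)) := not_lt.mpr hle
          rw [← hychar m] at h1
          exact lt_of_le_of_ne (not_lt.mp h1) hne2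
  · obtain ⟨m, rfl⟩ := Fin.exists_succAbove_eq hu
    rcases eq_or_ne v a with rfl | hv
    · rw [Fin.cycleRange_self, cycleRange_succAbove, ins2_apply_self, ins2_apply_succAbove]
      have hma : (m : ℕ) < (a : ℕ) := by
        have h := (Fin.succAbove_lt_iff_castSucc_lt a m).mp huv
        simpa [Fin.lt_def] using h
      constructor
      · rw [hxchar m]; exact hma
      · rw [Fin.succAbove_lt_iff_castSucc_lt, hychar m, Fin.lt_def]
        simp
    · obtain ⟨m', rfl⟩ := Fin.exists_succAbove_eq hv
      rw [cycleRange_succAbove, cycleRange_succAbove, ins2_apply_succAbove,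
        ins2_apply_succAbove, Fin.succAbove_lt_succAbove_iff]
      have hmm' : m < m' := (Fin.succAbove_lt_succAbove_iff (p := a)).mp huv
      exact ⟨htx hmm', hyiff m m'⟩

lemma consistency {n : ℕ} (μ : Measure (ℝ × ℝ)) [IsProbabilityMeasure μ]
    (hx : ∀ x : ℝ, μ.map Prod.fst {x} = 0) (hy : ∀ y : ℝ, μ.map Prod.snd {y} = 0)
    (π : Equiv.Perm (Fin n)) :
    (Measure.pi fun _ : Fin n => μ) (Aset n π)
      = ∑ ab : Fin (n + 1) × Fin (n + 1),
          (Measure.pi fun _ : Fin (n + 1) => μ) (Aset (n + 1) (ins2 ab.1 ab.2 π)) := by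
  classical
  set B : Set (Fin (n + 1) → ℝ × ℝ) := {p | (fun i : Fin n => p i.succ) ∈ Aset n π} with hB
  have hmp := measurePreserving_piFinSuccAbove (fun _ : Fin (n + 1) => μ) 0
  have hBpre : B = (MeasurableEquiv.piFinSuccAbove (fun _ : Fin (n + 1) => ℝ × ℝ) 0) ⁻¹'
      (Set.univ ×ˢ Aset n π) := by
    ext p
    simp only [hB, Set.mem_setOf_eq, Set.mem_preimage, Set.mem_prod, Set.mem_univ, true_and,
      MeasurableEquiv.piFinSuccAbove_apply, Fin.insertNthEquiv_symm_apply, Fin.removeNth,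
      Fin.zero_succAbove]
    exact Iff.rfl
  have hstepA : (Measure.pi fun _ : Fin (n + 1) => μ) B
      = (Measure.pi fun _ : Fin n => μ) (Aset n π) := by
    rw [hBpre, hmp.measure_preimage
      (MeasurableSet.univ.prod (measurableSet_Aset n π)).nullMeasurableSet]
    rw [Measure.prod_prod, measure_univ, one_mul]
  have hDnull : (Measure.pi fun _ : Fin (n + 1) => μ) (Dset (n + 1))ᶜ = 0 :=
    null_Dset_compl μ hx hy
  have hstepB : (Measure.pi fun _ : Fin (n + 1) => μ) B
      = (Measure.pi fun _ : Fin (n + 1) => μ) (B ∩ Dset (n + 1)) := by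
    rw [show B ∩ Dset (n + 1) = B \ (Dset (n + 1))ᶜ by simp [Set.diff_eq]]
    rw [measure_diff_null hDnull]
  have hunion : B ∩ Dset (n + 1)
      = ⋃ ab : Fin (n + 1) × Fin (n + 1), (Cset n π ab.1 ab.2 ∩ Dset (n + 1)) := by
    apply Set.Subset.antisymm
    · rintro p ⟨hpB, hpD⟩
      obtain ⟨a, b, hab⟩ := coverage π hpB hpD
      exact Set.mem_iUnion.mpr ⟨(a, b), hab, hpD⟩
    · rintro p hp
      obtain ⟨ab, hab, hpD⟩ := Set.mem_iUnion.mp hp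
      exact ⟨Cset_subset_B π ab.1 ab.2 hab, hpD⟩
  have hCmeas : ∀ ab : Fin (n + 1) × Fin (n + 1),
      MeasurableSet (Cset n π ab.1 ab.2 ∩ Dset (n + 1)) := fun ab =>
    ((measurableSet_Aset (n + 1) (ins2 ab.1 ab.2 π)).preimage
      (measurable_comp_perm _)).inter (measurableSet_Dset (n + 1))
  have hdisj : Pairwise (Function.onFun Disjoint fun ab : Fin (n + 1) × Fin (n + 1) =>
      Cset n π ab.1 ab.2 ∩ Dset (n + 1)) := by
    intro ab ab' hne
    rw [Function.onFun, Set.disjoint_left]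
    rintro p ⟨hp1, hpD⟩ ⟨hp2, _⟩
    apply hne
    have h1 := Cset_ranks π ab.1 ab.2 hp1 hpD
    have h2 := Cset_ranks π ab'.1 ab'.2 hp2 hpD
    have e1 : ab.1 = ab'.1 := Fin.ext (h1.1.trans h2.1.symm)
    have e2 : ab.2 = ab'.2 := Fin.ext (h1.2.trans h2.2.symm)
    exact Prod.ext e1 e2
  have hstepC : (Measure.pi fun _ : Fin (n + 1) => μ) (B ∩ Dset (n + 1))
      = ∑ ab : Fin (n + 1) × Fin (n + 1),
          (Measure.pi fun _ : Fin (n + 1) => μ) (Cset n π ab.1 ab.2 ∩ Dset (n + 1)) := by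
    rw [hunion, measure_iUnion hdisj hCmeas, tsum_fintype]
  have hcell : ∀ ab : Fin (n + 1) × Fin (n + 1),
      (Measure.pi fun _ : Fin (n + 1) => μ) (Cset n π ab.1 ab.2 ∩ Dset (n + 1))
        = (Measure.pi fun _ : Fin (n + 1) => μ) (Aset (n + 1) (ins2 ab.1 ab.2 π)) := by
    intro ab
    rw [show Cset n π ab.1 ab.2 ∩ Dset (n + 1) = Cset n π ab.1 ab.2 \ (Dset (n + 1))ᶜ by
      simp [Set.diff_eq]]
    rw [measure_diff_null hDnull]
    exact measure_preimage_comp_perm μ _ (measurableSet_Aset _ _)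
  rw [← hstepA, hstepB, hstepC]
  exact Finset.sum_congr rfl fun ab _ => hcell ab


lemma aset_pairwise_disjoint (m : ℕ) :
    Pairwise (Function.onFun Disjoint fun π : Equiv.Perm (Fin m) => Aset m π) := by
  intro π π' hne
  rw [Function.onFun, Set.disjoint_left]
  intro p hp hp'
  apply hne
  refine perm_eq_of_pattern π π' fun i j hij => ?_
  rw [← (hp i j hij).2, ← (hp' i j hij).2]

lemma measure_Uset_le (μ : Measure (ℝ × ℝ)) [IsProbabilityMeasure μ] (m : ℕ) :
    (m.factorial : ENNReal) * (Measure.pi fun _ : Fin m => μ)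
      (⋃ π : Equiv.Perm (Fin m), Aset m π) ≤ 1 := by
  classical
  set U : Set (Fin m → ℝ × ℝ) := ⋃ π : Equiv.Perm (Fin m), Aset m π with hU
  have hUmeas : MeasurableSet U := MeasurableSet.iUnion fun π => measurableSet_Aset m π
  have hdisj : Pairwise (Function.onFun Disjoint fun ρ : Equiv.Perm (Fin m) =>
      (fun p : Fin m → ℝ × ℝ => p ∘ ρ) ⁻¹' U) := by
    intro ρ ρ' hne
    rw [Function.onFun, Set.disjoint_left]
    intro p hp hp'
    obtain ⟨π, hπ⟩ : ∃ π, p ∘ ρ ∈ Aset m π := by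
      simpa [hU, Set.mem_iUnion] using hp
    obtain ⟨π', hπ'⟩ : ∃ π', p ∘ ρ' ∈ Aset m π' := by
      simpa [hU, Set.mem_iUnion] using hp'
    apply hne
    have hτ : StrictMono ((ρ⁻¹ * ρ' : Equiv.Perm (Fin m)) : Fin m → Fin m) := by
      intro l l' hll
      have hg : ((p ∘ ρ') l).1 < ((p ∘ ρ') l').1 := strictMono_x hπ' hll
      have hfeq : ∀ u : Fin m, ((p ∘ ρ) ((ρ⁻¹ * ρ' : Equiv.Perm (Fin m)) u)) = (p ∘ ρ') u := by
        intro u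
        simp [Function.comp]
      rw [← hfeq l, ← hfeq l'] at hg
      exact (strictMono_x hπ).lt_iff_lt.mp hg
    exact inv_mul_eq_one.mp (perm_eq_one_of_strictMono _ hτ)
  have hcalc : ∑ ρ : Equiv.Perm (Fin m),
      (Measure.pi fun _ : Fin m => μ) ((fun p : Fin m → ℝ × ℝ => p ∘ ρ) ⁻¹' U)
      = (Measure.pi fun _ : Fin m => μ)
          (⋃ ρ : Equiv.Perm (Fin m), (fun p : Fin m → ℝ × ℝ => p ∘ ρ) ⁻¹' U) := by
    rw [measure_iUnion hdisj fun ρ => hUmeas.preimage (measurable_comp_perm ρ), tsum_fintype]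
  have hval : ∀ ρ : Equiv.Perm (Fin m),
      (Measure.pi fun _ : Fin m => μ) ((fun p : Fin m → ℝ × ℝ => p ∘ ρ) ⁻¹' U)
      = (Measure.pi fun _ : Fin m => μ) U := fun ρ => measure_preimage_comp_perm μ ρ hUmeas
  calc (m.factorial : ENNReal) * (Measure.pi fun _ : Fin m => μ) U
      = ∑ ρ : Equiv.Perm (Fin m), (Measure.pi fun _ : Fin m => μ)
          ((fun p : Fin m → ℝ × ℝ => p ∘ ρ) ⁻¹' U) := by
        simp only [hval]
        rw [Finset.sum_const, Finset.card_univ, Fintype.card_perm, Fintype.card_fin,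
          nsmul_eq_mul]
    _ = (Measure.pi fun _ : Fin m => μ)
          (⋃ ρ : Equiv.Perm (Fin m), (fun p : Fin m → ℝ × ℝ => p ∘ ρ) ⁻¹' U) := hcalc
    _ ≤ 1 := by
        rw [← measure_univ (μ := (Measure.pi fun _ : Fin m => μ))]
        exact measure_mono (Set.subset_univ _)

lemma patternProb_eq (μ : Measure (ℝ × ℝ)) {m : ℕ} (π : Equiv.Perm (Fin m)) :
    patternProb μ π
      = (m.factorial : ℝ) * ((Measure.pi fun _ : Fin m => μ) (Aset m π)).toReal := rfl

lemma patternProb_nonneg (μ : Measure (ℝ × ℝ)) {m : ℕ} (π : Equiv.Perm (Fin m)) :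
    0 ≤ patternProb μ π := by
  rw [patternProb_eq]
  positivity

lemma sum_patternProb_le_one (μ : Measure (ℝ × ℝ)) [IsProbabilityMeasure μ] (m : ℕ) :
    ∑ π : Equiv.Perm (Fin m), patternProb μ π ≤ 1 := by
  classical
  have hU : (Measure.pi fun _ : Fin m => μ) (⋃ π : Equiv.Perm (Fin m), Aset m π)
      = ∑ π : Equiv.Perm (Fin m), (Measure.pi fun _ : Fin m => μ) (Aset m π) := by
    rw [measure_iUnion (aset_pairwise_disjoint m) fun π => measurableSet_Aset m π, tsum_fintype]
  have hle := measure_Uset_le μ m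
  rw [hU] at hle
  have heq : ∑ π : Equiv.Perm (Fin m), patternProb μ π
      = ((m.factorial : ENNReal) * ∑ π : Equiv.Perm (Fin m),
          (Measure.pi fun _ : Fin m => μ) (Aset m π)).toReal := by
    rw [ENNReal.toReal_mul, ENNReal.toReal_sum fun π _ => measure_ne_top _ _,
      Finset.mul_sum]
    refine Finset.sum_congr rfl fun π _ => ?_
    rw [patternProb_eq, ENNReal.toReal_natCast]
  rw [heq]
  calc ((m.factorial : ENNReal) * ∑ π : Equiv.Perm (Fin m),
          (Measure.pi fun _ : Fin m => μ) (Aset m π)).toReal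
      ≤ (1 : ENNReal).toReal := ENNReal.toReal_mono (by simp) hle
    _ = 1 := by simp

lemma patternProb_consistency (μ : Measure (ℝ × ℝ)) [IsProbabilityMeasure μ]
    (hx : ∀ x : ℝ, μ.map Prod.fst {x} = 0) (hy : ∀ y : ℝ, μ.map Prod.snd {y} = 0)
    {n : ℕ} (π : Equiv.Perm (Fin n)) :
    ((n : ℝ) + 1) * patternProb μ π
      = ∑ ab : Fin (n + 1) × Fin (n + 1), patternProb μ (ins2 ab.1 ab.2 π) := by
  have hc := consistency μ hx hy π
  calc ((n : ℝ) + 1) * patternProb μ π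
      = ((n + 1).factorial : ℝ)
          * ((Measure.pi fun _ : Fin n => μ) (Aset n π)).toReal := by
        rw [patternProb_eq]
        push_cast [Nat.factorial_succ]
        ring
    _ = ((n + 1).factorial : ℝ) * (∑ ab : Fin (n + 1) × Fin (n + 1),
          (Measure.pi fun _ : Fin (n + 1) => μ) (Aset (n + 1) (ins2 ab.1 ab.2 π))).toReal := by
        rw [hc]
    _ = ∑ ab : Fin (n + 1) × Fin (n + 1), patternProb μ (ins2 ab.1 ab.2 π) := by
        rw [ENNReal.toReal_sum fun _ _ => measure_ne_top _ _, Finset.mul_sum]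
        exact Finset.sum_congr rfl fun ab _ => (patternProb_eq μ _).symm

lemma entropy_regroup (μ : Measure (ℝ × ℝ)) {n : ℕ} (a : Fin (n + 1)) :
    samplingEntropy μ (n + 1) = ∑ π : Equiv.Perm (Fin n), ∑ b : Fin (n + 1),
      Real.negMulLog (patternProb μ (ins2 a b π)) := by
  rw [samplingEntropy]
  rw [← Fintype.sum_bijective _ (ins2_bijective a)
      (fun bπ : Fin (n + 1) × Equiv.Perm (Fin n) =>
        Real.negMulLog (patternProb μ (ins2 a bπ.1 bπ.2)))
      (fun σ => Real.negMulLog (patternProb μ σ)) (fun bπ => rfl)]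
  rw [Fintype.sum_prod_type]
  exact Finset.sum_comm

end SEQaux

/-- Quasimonotonicity of the sampling entropy sequence:
H_{k-1}(μ) - log k ≤ H_k(μ) ≤ H_{k-1}(μ) + log k for every pre-permuton μ and k ≥ 2. -/
theorem samplingEntropy_quasiMonotone
    (μ : Measure (ℝ × ℝ)) (hμ : IsPrePermuton μ) (k : ℕ) (hk : 2 ≤ k) :
    samplingEntropy μ (k - 1) - Real.log k ≤ samplingEntropy μ k ∧
      samplingEntropy μ k ≤ samplingEntropy μ (k - 1) + Real.log k := by
  classical
  obtain ⟨hprob, hx, hy⟩ := hμ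
  haveI := hprob
  obtain ⟨n, rfl⟩ : ∃ n : ℕ, k = n + 1 := ⟨k - 1, by omega⟩
  have hsub : n + 1 - 1 = n := rfl
  rw [hsub]
  set L : ℝ := Real.log ((n : ℝ) + 1) with hL
  have hcast : ((n + 1 : ℕ) : ℝ) = (n : ℝ) + 1 := by push_cast; ring
  rw [show Real.log ((n + 1 : ℕ) : ℝ) = L by rw [hcast]]
  set t : Equiv.Perm (Fin n) → ℝ := fun π => patternProb μ π with ht
  set T : Equiv.Perm (Fin (n + 1)) → ℝ := fun σ => patternProb μ σ with hT
  have htnn : ∀ π, 0 ≤ t π := fun π => SEQaux.patternProb_nonneg μ π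
  have hTnn : ∀ σ, 0 ≤ T σ := fun σ => SEQaux.patternProb_nonneg μ σ
  set St : ℝ := ∑ π : Equiv.Perm (Fin n), t π with hSt
  have hStnn : 0 ≤ St := Finset.sum_nonneg fun π _ => htnn π
  have hSt1 : St ≤ 1 := SEQaux.sum_patternProb_le_one μ n
  have hcons : ∀ π : Equiv.Perm (Fin n), ((n : ℝ) + 1) * t π
      = ∑ ab : Fin (n + 1) × Fin (n + 1), T (SEQaux.ins2 ab.1 ab.2 π) :=
    fun π => SEQaux.patternProb_consistency μ hx hy π
  set Hn : ℝ := samplingEntropy μ n with hHn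
  set H' : ℝ := samplingEntropy μ (n + 1) with hH'
  have hNpos : (0 : ℝ) < (n : ℝ) + 1 := by positivity
  have hlognn : 0 ≤ L := Real.log_nonneg (by norm_num)
  have hStL : St * L ≤ L := by
    nlinarith [mul_le_mul_of_nonneg_right hSt1 hlognn]
  have hkey : ((n : ℝ) + 1) * H'
      = ∑ π : Equiv.Perm (Fin n), ∑ ab : Fin (n + 1) × Fin (n + 1),
          Real.negMulLog (T (SEQaux.ins2 ab.1 ab.2 π)) := by
    calc ((n : ℝ) + 1) * H'
        = ∑ _a : Fin (n + 1), H' := by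
          rw [Finset.sum_const, Finset.card_univ, Fintype.card_fin, nsmul_eq_mul]
          push_cast
          ring
      _ = ∑ a : Fin (n + 1), ∑ π : Equiv.Perm (Fin n), ∑ b : Fin (n + 1),
            Real.negMulLog (T (SEQaux.ins2 a b π)) :=
          Finset.sum_congr rfl fun a _ => SEQaux.entropy_regroup μ a
      _ = ∑ π : Equiv.Perm (Fin n), ∑ a : Fin (n + 1), ∑ b : Fin (n + 1),
            Real.negMulLog (T (SEQaux.ins2 a b π)) := Finset.sum_comm
      _ = ∑ π : Equiv.Perm (Fin n), ∑ ab : Fin (n + 1) × Fin (n + 1),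
            Real.negMulLog (T (SEQaux.ins2 ab.1 ab.2 π)) := by
          refine Finset.sum_congr rfl fun π _ => ?_
          rw [Fintype.sum_prod_type]
  have hmulexp : ∀ x : ℝ, Real.negMulLog (((n : ℝ) + 1) * x)
      = ((n : ℝ) + 1) * Real.negMulLog x - ((n : ℝ) + 1) * x * L := by
    intro x
    rw [Real.negMulLog_mul]
    simp only [Real.negMulLog, hL]
    ring
  have hHnsum : Hn = ∑ π : Equiv.Perm (Fin n), Real.negMulLog (t π) := rfl
  constructor
  · -- lower bound
    have hper : ∀ π : Equiv.Perm (Fin n),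
        ((n : ℝ) + 1) * Real.negMulLog (t π) - ((n : ℝ) + 1) * t π * L
          ≤ ∑ ab : Fin (n + 1) × Fin (n + 1), Real.negMulLog (T (SEQaux.ins2 ab.1 ab.2 π)) := by
      intro π
      have h1 := SEQaux.negMulLog_sum_le (s := (Finset.univ : Finset (Fin (n + 1) × Fin (n + 1))))
        (f := fun ab => T (SEQaux.ins2 ab.1 ab.2 π)) (fun ab _ => hTnn _)
      rw [← hcons π, hmulexp (t π)] at h1
      exact h1
    have hsumper := Finset.sum_le_sum fun π (_ : π ∈ Finset.univ) => hper π
    rw [← hkey] at hsumper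
    have hLHS : ∑ π : Equiv.Perm (Fin n),
        (((n : ℝ) + 1) * Real.negMulLog (t π) - ((n : ℝ) + 1) * t π * L)
        = ((n : ℝ) + 1) * Hn - ((n : ℝ) + 1) * St * L := by
      rw [Finset.sum_sub_distrib, ← Finset.mul_sum, ← hHnsum]
      congr 1
      rw [hSt, Finset.mul_sum, Finset.sum_mul]
    rw [hLHS] at hsumper
    have hdiv : Hn - St * L ≤ H' := by
      have h2 : ((n : ℝ) + 1) * (Hn - St * L) ≤ ((n : ℝ) + 1) * H' := by nlinarith [hsumper]
      exact le_of_mul_le_mul_left h2 hNpos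
    linarith
  · -- upper bound
    have hcard : ((Finset.univ : Finset (Fin (n + 1) × Fin (n + 1))).card : ℝ)
        = ((n : ℝ) + 1) * ((n : ℝ) + 1) := by
      rw [Finset.card_univ, Fintype.card_prod, Fintype.card_fin]
      push_cast
      ring
    have hlogcard : Real.log (((Finset.univ : Finset (Fin (n + 1) × Fin (n + 1))).card : ℝ))
        = L + L := by
      rw [hcard, Real.log_mul (ne_of_gt hNpos) (ne_of_gt hNpos), hL]
    have hper : ∀ π : Equiv.Perm (Fin n),
        ∑ ab : Fin (n + 1) × Fin (n + 1), Real.negMulLog (T (SEQaux.ins2 ab.1 ab.2 π))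
          ≤ ((n : ℝ) + 1) * Real.negMulLog (t π) + ((n : ℝ) + 1) * t π * L := by
      intro π
      have h1 := SEQaux.sum_negMulLog_le (s := (Finset.univ : Finset (Fin (n + 1) × Fin (n + 1))))
        (f := fun ab => T (SEQaux.ins2 ab.1 ab.2 π)) (fun ab _ => hTnn _)
      rw [← hcons π, hmulexp (t π), hlogcard] at h1
      have htπ : 0 ≤ t π := htnn π
      nlinarith [h1, mul_nonneg htπ hlognn]
    have hsumper := Finset.sum_le_sum fun π (_ : π ∈ Finset.univ) => hper π
    rw [← hkey] at hsumper
    have hRHS : ∑ π : Equiv.Perm (Fin n),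
        (((n : ℝ) + 1) * Real.negMulLog (t π) + ((n : ℝ) + 1) * t π * L)
        = ((n : ℝ) + 1) * Hn + ((n : ℝ) + 1) * St * L := by
      rw [Finset.sum_add_distrib, ← Finset.mul_sum, ← hHnsum]
      congr 1
      rw [hSt, Finset.mul_sum, Finset.sum_mul]
    rw [hRHS] at hsumper
    have hdiv : H' ≤ Hn + St * L := by
      have h2 : ((n : ℝ) + 1) * H' ≤ ((n : ℝ) + 1) * (Hn + St * L) := by nlinarith [hsumper]
      exact le_of_mul_le_mul_left h2 hNpos
    linarith
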